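/- Let T ≥ 1 be an integer, Y₁,…,Yₙ i.i.d. symmetric real random variables, and x = (x₁,…,xₙ) ∈ ℝⁿ with ||x||₂ ≤ 1 and ||x||_∞ < v. Then ||Σ_i Y_ix_i||_{2T} ≲ v·sup_{1≤t≤T} (T/t)·(1/(Tv²))^{1/(2t)}·||Y₁||_{2t}, where the supremum is over integers t. -/

import Mathlib

open MeasureTheory ProbabilityTheory Real Finset
open scoped BigOperators ENNReal NNReal Classical

noncomputable section

/-- Euclidean (`ℓ₂`) norm of a finite real vector. -/
def l2 {k : ℕ} (x : Fin k → ℝ) : ℝ := Real.sqrt (∑ i, x i ^ 2)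

/-- Sup (`ℓ_∞`) norm of a finite real vector. -/
def linf {k : ℕ} (x : Fin k → ℝ) : ℝ := ⨆ i, |x i|

/-- The moment norm `‖X‖_q = (E |X|^q)^{1/q}`. -/
def mom {Ω : Type*} [MeasurableSpace Ω] (μ : Measure Ω) (q : ℝ) (X : Ω → ℝ) : ℝ :=
  (∫ ω, |X ω| ^ q ∂μ) ^ (1 / q)

/-- A sparse JL distribution, presented by the random families `σ` (Rademachers) and
`η` (Bernoulli selectors) on a probability space. -/
structure SparseJL {Ω : Type*} [MeasurableSpace Ω] (μ : Measure Ω) (n m s : ℕ) where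
  σ : Fin m → Fin n → Ω → ℝ
  η : Fin m → Fin n → Ω → ℝ
  σ_meas : ∀ r i, Measurable (σ r i)
  η_meas : ∀ r i, Measurable (η r i)
  σ_rademacher : ∀ r i, μ {ω | σ r i ω = 1} = 1/2 ∧ μ {ω | σ r i ω = -1} = 1/2
  σ_indep : iIndepFun
      (fun (p : Fin m × Fin n) ω => σ p.1 p.2 ω) μ
  η_bool : ∀ r i ω, η r i ω = 0 ∨ η r i ω = 1
  η_mean : ∀ r i, ∫ ω, η r i ω ∂μ = (s : ℝ) / (m : ℝ)
  σ_η_indep : IndepFun (fun ω (p : Fin m × Fin n) => σ p.1 p.2 ω)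
      (fun ω (p : Fin m × Fin n) => η p.1 p.2 ω) μ
  η_cols_indep : iIndepFun
      (fun (i : Fin n) ω (r : Fin m) => η r i ω) μ
  η_col_sum : ∀ i ω, ∑ r, η r i ω = (s : ℝ)
  η_neg_corr : ∀ i (S : Finset (Fin m)),
      ∫ ω, ∏ r ∈ S, η r i ω ∂μ ≤ ((s : ℝ) / (m : ℝ)) ^ S.card

/-- A uniform sparse JL distribution: each column's support is a uniformly random
`s`-subset of the rows. -/
structure UniformSparseJL {Ω : Type*} [MeasurableSpace Ω] (μ : Measure Ω) (n m s : ℕ)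
    extends SparseJL μ n m s where
  uniform : ∀ (i : Fin n) (S : Finset (Fin m)), S.card = s →
      μ {ω | ∀ r, η r i ω = if r ∈ S then 1 else 0} = ((Nat.choose m s : ℝ≥0∞))⁻¹

namespace SparseJL

variable {Ω : Type*} [MeasurableSpace Ω] {μ : Measure Ω} {n m s : ℕ}

/-- The random matrix entry `A_{r,i} = η_{r,i} σ_{r,i} / √s`. -/
def A (J : SparseJL μ n m s) (ω : Ω) (r : Fin m) (i : Fin n) : ℝ :=
  J.η r i ω * J.σ r i ω / Real.sqrt s

/-- The row error term `Z_r(x) = Σ_{i ≠ j} η_{r,i} η_{r,j} σ_{r,i} σ_{r,j} x_i x_j`. -/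
def Z (J : SparseJL μ n m s) (r : Fin m) (x : Fin n → ℝ) (ω : Ω) : ℝ :=
  ∑ i, ∑ j, if i ≠ j then
    J.η r i ω * J.η r j ω * J.σ r i ω * J.σ r j ω * x i * x j else 0

/-- The error term `R(x) = (1/s) Σ_r Z_r(x)`. -/
def R (J : SparseJL μ n m s) (x : Fin n → ℝ) (ω : Ω) : ℝ :=
  (1 / (s : ℝ)) * ∑ r, J.Z r x ω

/-- `v(m, ε, δ, s)`: the sup of all `v ∈ [0,1]` such that the JL norm-preservation
condition holds with distortion `ε` and failure probability `δ` on
`S_v = {x : ‖x‖_∞ ≤ v ‖x‖₂}`. -/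
def vstat (J : SparseJL μ n m s) (ε δ : ℝ) : ℝ :=
  sSup {v : ℝ | v ∈ Set.Icc (0:ℝ) 1 ∧ ∀ x : Fin n → ℝ, linf x ≤ v * l2 x →
    ENNReal.ofReal (1 - δ) <
      μ {ω | (1 - ε) * l2 x ≤ l2 (fun r => ∑ i, J.A ω r i * x i) ∧
             l2 (fun r => ∑ i, J.A ω r i * x i) ≤ (1 + ε) * l2 x}}

end SparseJL

/-- The vector `(v, …, v, 0, …, 0)` with `N` nonzero coordinates. -/
def vVec (n N : ℕ) (v : ℝ) : Fin n → ℝ := fun i => if (i : ℕ) < N then v else 0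

/-- Decreasing rearrangement of a finite tuple of reals. -/
def decSort {k : ℕ} (w : Fin k → ℝ) : Fin k → ℝ := w ∘ (Tuple.sort (fun i => -w i))

/-! ### Auxiliary lemmas for Statement 12 -/

open scoped Nat

section Statement12Aux

lemma aux_pow_le_exp_mul_factorial (m : ℕ) : (m : ℝ) ^ m ≤ Real.exp m * (m ! : ℝ) := by
  have h := Real.sum_le_exp_of_nonneg (x := (m:ℝ)) (by positivity) (m+1)
  have h1 : ((m:ℝ))^m / m ! ≤ Real.exp m :=
    le_trans (Finset.single_le_sum (f := fun i => (m:ℝ)^i / i !)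
      (fun i _ => by positivity) (Finset.self_mem_range_succ m)) h
  have hf : (0:ℝ) < m ! := by positivity
  calc (m:ℝ)^m = ((m:ℝ)^m / m !) * m ! := by field_simp
    _ ≤ Real.exp m * m ! := by
        exact mul_le_mul_of_nonneg_right h1 hf.le

lemma aux_geom : ∀ T : ℕ, ∑ d ∈ Icc 1 T, ((1:ℝ)/2)^d = 1 - (1/2)^T := by
  intro T
  induction T with
  | zero => simp
  | succ T ih =>
      rw [Finset.sum_Icc_succ_top (by omega), ih]
      ring

lemma aux_esymm_step {n : ℕ} (y : Fin n → ℝ) (hy : ∀ i, 0 ≤ y i) (k : ℕ) :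
    ((k+1 : ℕ) : ℝ) * ∑ B ∈ powersetCard (k+1) (univ : Finset (Fin n)), ∏ i ∈ B, y i ≤
    (∑ i, y i) * ∑ A ∈ powersetCard k (univ : Finset (Fin n)), ∏ i ∈ A, y i := by
  have key : ∑ B ∈ powersetCard (k+1) (univ : Finset (Fin n)), ((k+1:ℕ):ℝ) * ∏ i ∈ B, y i
      = ∑ A ∈ powersetCard k (univ : Finset (Fin n)), ∑ i ∈ univ \ A, ∏ j ∈ insert i A, y j := by
    have lhs : ∑ B ∈ powersetCard (k+1) (univ : Finset (Fin n)), ((k+1:ℕ):ℝ) * ∏ i ∈ B, y i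
        = ∑ B ∈ powersetCard (k+1) (univ : Finset (Fin n)), ∑ i ∈ B, ∏ j ∈ B, y j := by
      refine Finset.sum_congr rfl fun B hB => ?_
      rw [Finset.sum_const, (Finset.mem_powersetCard.1 hB).2, nsmul_eq_mul]
    rw [lhs, Finset.sum_sigma', Finset.sum_sigma']
    refine Finset.sum_nbij' (fun p => ⟨p.1.erase p.2, p.2⟩) (fun p => ⟨insert p.2 p.1, p.2⟩)
      ?_ ?_ ?_ ?_ ?_
    · rintro ⟨B, i⟩ hp
      simp only [Finset.mem_sigma, Finset.mem_powersetCard] at *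
      obtain ⟨⟨-, hcard⟩, hi⟩ := hp
      refine ⟨⟨Finset.subset_univ _, ?_⟩, by simp [hi]⟩
      rw [Finset.card_erase_of_mem hi, hcard]
      omega
    · rintro ⟨A, i⟩ hp
      simp only [Finset.mem_sigma, Finset.mem_powersetCard, Finset.mem_sdiff] at *
      obtain ⟨⟨-, hcard⟩, -, hi⟩ := hp
      exact ⟨⟨Finset.subset_univ _, by rw [Finset.card_insert_of_notMem hi, hcard]⟩,
        Finset.mem_insert_self _ _⟩
    · rintro ⟨B, i⟩ hp
      simp only [Finset.mem_sigma] at hp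
      simp [Finset.insert_erase hp.2]
    · rintro ⟨A, i⟩ hp
      simp only [Finset.mem_sigma, Finset.mem_sdiff] at hp
      simp [Finset.erase_insert hp.2.2]
    · rintro ⟨B, i⟩ hp
      simp only [Finset.mem_sigma] at hp
      simp [Finset.insert_erase hp.2]
  calc ((k+1 : ℕ) : ℝ) * ∑ B ∈ powersetCard (k+1) (univ : Finset (Fin n)), ∏ i ∈ B, y i
      = ∑ B ∈ powersetCard (k+1) (univ : Finset (Fin n)), ((k+1:ℕ):ℝ) * ∏ i ∈ B, y i := by
        rw [Finset.mul_sum]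
    _ = ∑ A ∈ powersetCard k (univ : Finset (Fin n)), ∑ i ∈ univ \ A, ∏ j ∈ insert i A, y j :=
        key
    _ ≤ ∑ A ∈ powersetCard k (univ : Finset (Fin n)), ∑ i ∈ (univ : Finset (Fin n)),
          y i * ∏ j ∈ A, y j := by
        refine Finset.sum_le_sum fun A hA => ?_
        have h1 : ∀ i ∈ univ \ A, ∏ j ∈ insert i A, y j = y i * ∏ j ∈ A, y j := by
          intro i hi
          rw [Finset.prod_insert (Finset.mem_sdiff.1 hi).2]
        rw [Finset.sum_congr rfl h1]
        refine Finset.sum_le_sum_of_subset_of_nonneg (Finset.sdiff_subset) ?_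
        intro i _ _
        exact mul_nonneg (hy i) (Finset.prod_nonneg fun j _ => hy j)
    _ = (∑ i, y i) * ∑ A ∈ powersetCard k (univ : Finset (Fin n)), ∏ i ∈ A, y i := by
        rw [Finset.sum_comm]
        rw [Finset.sum_mul]
        refine Finset.sum_congr rfl fun i _ => ?_
        rw [Finset.mul_sum]

lemma aux_esymm {n : ℕ} (y : Fin n → ℝ) (hy : ∀ i, 0 ≤ y i) (k : ℕ) :
    (k ! : ℝ) * ∑ A ∈ powersetCard k (univ : Finset (Fin n)), ∏ i ∈ A, y i ≤ (∑ i, y i) ^ k := by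
  induction k with
  | zero => simp
  | succ k ih =>
      have hsum : (0:ℝ) ≤ ∑ i, y i := Finset.sum_nonneg fun i _ => hy i
      have hstep := aux_esymm_step y hy k
      calc ((k+1)! : ℝ) * ∑ A ∈ powersetCard (k+1) (univ : Finset (Fin n)), ∏ i ∈ A, y i
          = (k ! : ℝ) * (((k+1:ℕ):ℝ) * ∑ A ∈ powersetCard (k+1) (univ : Finset (Fin n)),
              ∏ i ∈ A, y i) := by
            rw [Nat.factorial_succ]
            push_cast
            ring
        _ ≤ (k ! : ℝ) * ((∑ i, y i) * ∑ A ∈ powersetCard k (univ : Finset (Fin n)),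
              ∏ i ∈ A, y i) := by
            exact mul_le_mul_of_nonneg_left hstep (by positivity)
        _ = (∑ i, y i) * ((k ! : ℝ) * ∑ A ∈ powersetCard k (univ : Finset (Fin n)),
              ∏ i ∈ A, y i) := by ring
        _ ≤ (∑ i, y i) * (∑ i, y i) ^ k := mul_le_mul_of_nonneg_left ih hsum
        _ = (∑ i, y i) ^ (k+1) := by ring

lemma aux_comp_sum {n : ℕ} (T : ℕ) (A : Finset (Fin n)) :
    ∑ e ∈ (piAntidiag (univ : Finset (Fin n)) T).filter
        (fun e => (univ : Finset (Fin n)).filter (fun i => e i ≠ 0) = A),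
      ∏ i ∈ A, ((1:ℝ)/2) ^ e i ≤ 1 := by
  set s := (piAntidiag (univ : Finset (Fin n)) T).filter
      (fun e => (univ : Finset (Fin n)).filter (fun i => e i ≠ 0) = A) with hs
  have hmem : ∀ e ∈ s, (∀ i, i ∈ A ↔ e i ≠ 0) ∧ ∑ i, e i = T := by
    intro e he
    rw [hs, Finset.mem_filter, Finset.mem_piAntidiag] at he
    refine ⟨fun i => ?_, he.1.1⟩
    rw [← he.2]
    simp
  set Ψ : (Fin n → ℕ) → (∀ i ∈ A, ℕ) := fun e => fun i _ => e i with hΨ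
  have hinj : Set.InjOn Ψ s := by
    intro e he e' he' heq
    funext i
    by_cases hi : i ∈ A
    · exact congrFun (congrFun heq i) hi
    · have h1 := (hmem e he).1 i
      have h2 := (hmem e' he').1 i
      simp only [hi, false_iff, not_not] at h1 h2
      rw [h1, h2]
  have himage : s.image Ψ ⊆ A.pi (fun _ => Finset.Icc 1 T) := by
    intro p hp
    rw [Finset.mem_image] at hp
    obtain ⟨e, he, rfl⟩ := hp
    rw [Finset.mem_pi]
    intro i hi
    have h1 := ((hmem e he).1 i).1 hi
    have h2 : e i ≤ T := by
      rw [← (hmem e he).2]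
      exact Finset.single_le_sum (fun j _ => Nat.zero_le _) (Finset.mem_univ i)
    simp only [hΨ]
    rw [Finset.mem_Icc]
    omega
  calc ∑ e ∈ s, ∏ i ∈ A, ((1:ℝ)/2) ^ e i
      = ∑ e ∈ s, ∏ x ∈ A.attach, ((1:ℝ)/2) ^ (Ψ e x.1 x.2) := by
        refine Finset.sum_congr rfl fun e he => ?_
        rw [← Finset.prod_attach]
    _ = ∑ p ∈ s.image Ψ, ∏ x ∈ A.attach, ((1:ℝ)/2) ^ (p x.1 x.2) := by
        rw [Finset.sum_image (fun e he e' he' h => hinj he he' h)]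
    _ ≤ ∑ p ∈ A.pi (fun _ => Finset.Icc 1 T), ∏ x ∈ A.attach, ((1:ℝ)/2) ^ (p x.1 x.2) := by
        refine Finset.sum_le_sum_of_subset_of_nonneg himage fun p _ _ => ?_
        exact Finset.prod_nonneg fun x _ => by positivity
    _ = ∏ i ∈ A, ∑ d ∈ Finset.Icc 1 T, ((1:ℝ)/2) ^ d := by
        rw [Finset.prod_sum]
    _ ≤ 1 := by
        refine Finset.prod_le_one (fun i _ => ?_) (fun i _ => ?_)
        · exact Finset.sum_nonneg fun d _ => by positivity
        · rw [aux_geom]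
          have : (0:ℝ) ≤ (1/2)^T := by positivity
          linarith

lemma aux_sigma_bound {n T : ℕ} (w : Fin n → ℝ) (hw : ∀ i, 0 ≤ w i) (hwsum : ∑ i, w i ≤ 1) :
    ∑ e ∈ piAntidiag (univ : Finset (Fin n)) T,
      ∏ i ∈ (univ : Finset (Fin n)).filter (fun i => e i ≠ 0), ((T:ℝ) * w i)
    ≤ 2^T * Real.exp T := by
  have hTw : ∀ i, 0 ≤ (T:ℝ) * w i := fun i => mul_nonneg (Nat.cast_nonneg T) (hw i)
  have hsplit : ∑ e ∈ piAntidiag (univ : Finset (Fin n)) T,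
      ∏ i ∈ (univ : Finset (Fin n)).filter (fun i => e i ≠ 0), ((T:ℝ) * w i)
      = ∑ A ∈ (univ : Finset (Fin n)).powerset,
          ∑ e ∈ (piAntidiag (univ : Finset (Fin n)) T).filter
            (fun e => (univ : Finset (Fin n)).filter (fun i => e i ≠ 0) = A),
          ∏ i ∈ (univ : Finset (Fin n)).filter (fun i => e i ≠ 0), ((T:ℝ) * w i) :=
    (Finset.sum_fiberwise_of_maps_to
      (fun e _ => Finset.mem_powerset.2 (Finset.filter_subset _ _)) _).symm
  have hinner : ∀ A ∈ (univ : Finset (Fin n)).powerset,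
      ∑ e ∈ (piAntidiag (univ : Finset (Fin n)) T).filter
          (fun e => (univ : Finset (Fin n)).filter (fun i => e i ≠ 0) = A),
          ∏ i ∈ (univ : Finset (Fin n)).filter (fun i => e i ≠ 0), ((T:ℝ) * w i)
      ≤ (2:ℝ)^T * ∏ i ∈ A, ((T:ℝ) * w i) := by
    intro A hA
    have hPnn : (0:ℝ) ≤ ∏ i ∈ A, ((T:ℝ) * w i) := Finset.prod_nonneg fun i _ => hTw i
    have h1 : ∀ e ∈ (piAntidiag (univ : Finset (Fin n)) T).filter
        (fun e => (univ : Finset (Fin n)).filter (fun i => e i ≠ 0) = A),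
        ∏ i ∈ (univ : Finset (Fin n)).filter (fun i => e i ≠ 0), ((T:ℝ) * w i)
        = ((2:ℝ)^T * ∏ i ∈ A, ((T:ℝ) * w i)) * ∏ i ∈ A, ((1:ℝ)/2) ^ e i := by
      intro e he
      rw [Finset.mem_filter, Finset.mem_piAntidiag] at he
      obtain ⟨⟨hsum, -⟩, hAe⟩ := he
      have hsumA : ∑ i ∈ A, e i = T := by
        rw [← hAe, Finset.sum_filter_ne_zero]
        exact hsum
      have hhalf : ∏ i ∈ A, ((1:ℝ)/2) ^ e i = ((1:ℝ)/2)^T := by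
        rw [Finset.prod_pow_eq_pow_sum, hsumA]
      rw [hAe, hhalf]
      have h12 : (2:ℝ)^T * ((1:ℝ)/2)^T = 1 := by
        rw [← mul_pow]
        norm_num
      calc ∏ i ∈ A, ((T:ℝ)*w i)
          = (∏ i ∈ A, ((T:ℝ)*w i)) * ((2:ℝ)^T * ((1:ℝ)/2)^T) := by rw [h12, mul_one]
        _ = ((2:ℝ)^T * ∏ i ∈ A, ((T:ℝ)*w i)) * ((1:ℝ)/2)^T := by ring
    rw [Finset.sum_congr rfl h1, ← Finset.mul_sum]
    calc ((2:ℝ)^T * ∏ i ∈ A, ((T:ℝ) * w i)) *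
          ∑ e ∈ (piAntidiag (univ : Finset (Fin n)) T).filter
            (fun e => (univ : Finset (Fin n)).filter (fun i => e i ≠ 0) = A),
            ∏ i ∈ A, ((1:ℝ)/2) ^ e i
        ≤ ((2:ℝ)^T * ∏ i ∈ A, ((T:ℝ) * w i)) * 1 := by
          refine mul_le_mul_of_nonneg_left (aux_comp_sum T A) (by positivity)
      _ = (2:ℝ)^T * ∏ i ∈ A, ((T:ℝ) * w i) := by rw [mul_one]
  have hpow : ∑ A ∈ (univ : Finset (Fin n)).powerset, ∏ i ∈ A, ((T:ℝ) * w i)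
      ≤ Real.exp T := by
    rw [Finset.sum_powerset]
    have hcard : #(univ : Finset (Fin n)) = n := Finset.card_univ.trans (Fintype.card_fin n)
    rw [hcard]
    have hk : ∀ k ∈ Finset.range (n+1),
        ∑ A ∈ powersetCard k (univ : Finset (Fin n)), ∏ i ∈ A, ((T:ℝ) * w i)
        ≤ (T:ℝ)^k / k ! := by
      intro k _
      have h2 : ∀ A ∈ powersetCard k (univ : Finset (Fin n)),
          ∏ i ∈ A, ((T:ℝ) * w i) = (T:ℝ)^k * ∏ i ∈ A, w i := by
        intro A hA
        rw [Finset.prod_mul_distrib, Finset.prod_const, (Finset.mem_powersetCard.1 hA).2]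
      rw [Finset.sum_congr rfl h2, ← Finset.mul_sum]
      have hesymm : ∑ A ∈ powersetCard k (univ : Finset (Fin n)), ∏ i ∈ A, w i
          ≤ 1 / k ! := by
        rw [le_div_iff₀ (by positivity : (0:ℝ) < (k ! : ℝ))]
        calc (∑ A ∈ powersetCard k (univ : Finset (Fin n)), ∏ i ∈ A, w i) * k !
            = (k ! : ℝ) * ∑ A ∈ powersetCard k (univ : Finset (Fin n)), ∏ i ∈ A, w i := by ring
          _ ≤ (∑ i, w i)^k := aux_esymm w hw k
          _ ≤ 1 := pow_le_one₀ (Finset.sum_nonneg fun i _ => hw i) hwsum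
      calc (T:ℝ)^k * ∑ A ∈ powersetCard k (univ : Finset (Fin n)), ∏ i ∈ A, w i
          ≤ (T:ℝ)^k * (1 / k !) := mul_le_mul_of_nonneg_left hesymm (by positivity)
        _ = (T:ℝ)^k / k ! := by ring
    calc ∑ k ∈ Finset.range (n+1), ∑ A ∈ powersetCard k (univ : Finset (Fin n)),
          ∏ i ∈ A, ((T:ℝ) * w i)
        ≤ ∑ k ∈ Finset.range (n+1), (T:ℝ)^k / k ! := Finset.sum_le_sum hk
      _ ≤ Real.exp T := Real.sum_le_exp_of_nonneg (Nat.cast_nonneg T) (n+1)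
  calc ∑ e ∈ piAntidiag (univ : Finset (Fin n)) T,
      ∏ i ∈ (univ : Finset (Fin n)).filter (fun i => e i ≠ 0), ((T:ℝ) * w i)
      = _ := hsplit
    _ ≤ ∑ A ∈ (univ : Finset (Fin n)).powerset, (2:ℝ)^T * ∏ i ∈ A, ((T:ℝ) * w i) :=
        Finset.sum_le_sum hinner
    _ = (2:ℝ)^T * ∑ A ∈ (univ : Finset (Fin n)).powerset, ∏ i ∈ A, ((T:ℝ) * w i) := by
        rw [Finset.mul_sum]
    _ ≤ (2:ℝ)^T * Real.exp T :=
        mul_le_mul_of_nonneg_left hpow (by positivity)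

lemma aux_multinomial_bound {n T : ℕ} (hT : 0 < T) (e : Fin n → ℕ) (he : ∑ i, e i = T) :
    (Nat.multinomial (univ : Finset (Fin n)) (fun i => 2 * e i) : ℝ) *
      ∏ i, ((e i : ℝ) / (T:ℝ)) ^ (2 * e i) ≤ Real.exp (2*(T:ℝ)) := by
  have hTpos : (0:ℝ) < (T:ℝ) := by exact_mod_cast hT
  have hsum2 : ∑ i, 2 * e i = 2 * T := by rw [← Finset.mul_sum, he]
  have hspec : ((∏ i, (2 * e i)!) * Nat.multinomial (univ : Finset (Fin n)) (fun i => 2 * e i) : ℕ)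
      = (2*T)! := by
    have := Nat.multinomial_spec (univ : Finset (Fin n)) (fun i => 2 * e i)
    rwa [hsum2] at this
  have hfacpos : (0:ℝ) < ∏ i, ((2 * e i)! : ℝ) := Finset.prod_pos fun i _ => by positivity
  have h2 : ∏ i, ((2 * e i : ℕ) : ℝ) ^ (2 * e i)
      = (2:ℝ)^(2*T) * ∏ i, ((e i : ℝ)) ^ (2 * e i) := by
    have : ∀ i ∈ (univ : Finset (Fin n)),
        ((2 * e i : ℕ) : ℝ) ^ (2 * e i) = (2:ℝ)^(2 * e i) * ((e i : ℝ)) ^ (2 * e i) := by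
      intro i _
      rw [← mul_pow]
      push_cast
      ring_nf
    rw [Finset.prod_congr rfl this, Finset.prod_mul_distrib,
      Finset.prod_pow_eq_pow_sum _ _ _, hsum2]
  have h3 : ∏ i, ((2 * e i : ℕ) : ℝ) ^ (2 * e i)
      ≤ Real.exp (2*(T:ℝ)) * ∏ i, ((2 * e i)! : ℝ) := by
    calc ∏ i, ((2 * e i : ℕ) : ℝ) ^ (2 * e i)
        ≤ ∏ i, (Real.exp ((2 * e i : ℕ) : ℝ) * ((2 * e i)! : ℝ)) := by
          refine Finset.prod_le_prod (fun i _ => by positivity) (fun i _ => ?_)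
          exact aux_pow_le_exp_mul_factorial (2 * e i)
      _ = (∏ i, Real.exp ((2 * e i : ℕ) : ℝ)) * ∏ i, ((2 * e i)! : ℝ) := by
          rw [Finset.prod_mul_distrib]
      _ = Real.exp (2*(T:ℝ)) * ∏ i, ((2 * e i)! : ℝ) := by
          rw [← Real.exp_sum]
          congr 1
          rw [← Nat.cast_sum, hsum2]
          push_cast
          ring
  have h4 : ((2*T)! : ℝ) ≤ (2:ℝ)^(2*T) * (T:ℝ)^(2*T) := by
    calc ((2*T)! : ℝ) ≤ ((2*T:ℕ) : ℝ)^(2*T) := by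
          exact_mod_cast Nat.factorial_le_pow (2*T)
      _ = (2:ℝ)^(2*T) * (T:ℝ)^(2*T) := by
          rw [← mul_pow]
          push_cast
          ring
  have hkey : ((2*T)! : ℝ) * ∏ i, ((e i : ℝ)) ^ (2 * e i)
      ≤ Real.exp (2*(T:ℝ)) * (T:ℝ)^(2*T) * ∏ i, ((2 * e i)! : ℝ) := by
    have hmul : ((2*T)! : ℝ) * ∏ i, ((2 * e i : ℕ) : ℝ) ^ (2 * e i)
        ≤ ((2:ℝ)^(2*T) * (T:ℝ)^(2*T)) * (Real.exp (2*(T:ℝ)) * ∏ i, ((2 * e i)! : ℝ)) := by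
      refine mul_le_mul h4 h3 (Finset.prod_nonneg fun i _ => by positivity) (by positivity)
    rw [h2] at hmul
    have h5 : (2:ℝ)^(2*T) * (((2*T)! : ℝ) * ∏ i, ((e i : ℝ)) ^ (2 * e i))
        ≤ (2:ℝ)^(2*T) * (Real.exp (2*(T:ℝ)) * (T:ℝ)^(2*T) * ∏ i, ((2 * e i)! : ℝ)) := by
      calc (2:ℝ)^(2*T) * (((2*T)! : ℝ) * ∏ i, ((e i : ℝ)) ^ (2 * e i))
          = ((2*T)! : ℝ) * ((2:ℝ)^(2*T) * ∏ i, ((e i : ℝ)) ^ (2 * e i)) := by ring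
        _ ≤ ((2:ℝ)^(2*T) * (T:ℝ)^(2*T)) * (Real.exp (2*(T:ℝ)) * ∏ i, ((2 * e i)! : ℝ)) := hmul
        _ = (2:ℝ)^(2*T) * (Real.exp (2*(T:ℝ)) * (T:ℝ)^(2*T) * ∏ i, ((2 * e i)! : ℝ)) := by ring
    exact le_of_mul_le_mul_left h5 (by positivity)
  have hdiv : ∏ i, ((e i : ℝ) / (T:ℝ)) ^ (2 * e i)
      = (∏ i, ((e i : ℝ)) ^ (2 * e i)) / (T:ℝ)^(2*T) := by
    simp_rw [div_pow]
    rw [Finset.prod_div_distrib, Finset.prod_pow_eq_pow_sum _ _ _, hsum2]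
  rw [hdiv, ← mul_div_assoc, div_le_iff₀ (by positivity : (0:ℝ) < (T:ℝ)^(2*T))]
  refine le_of_mul_le_mul_right ?_ hfacpos
  have hcast : (Nat.multinomial (univ : Finset (Fin n)) (fun i => 2 * e i) : ℝ) *
      ∏ i, ((2 * e i)! : ℝ) = ((2*T)! : ℝ) := by
    rw [← Nat.cast_prod, ← Nat.cast_mul, mul_comm]
    exact_mod_cast congrArg (fun k : ℕ => (k : ℝ)) hspec
  calc (Nat.multinomial (univ : Finset (Fin n)) (fun i => 2 * e i) : ℝ) *
        (∏ i, ((e i : ℝ)) ^ (2 * e i)) * ∏ i, ((2 * e i)! : ℝ)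
      = ((Nat.multinomial (univ : Finset (Fin n)) (fun i => 2 * e i) : ℝ) *
        ∏ i, ((2 * e i)! : ℝ)) * ∏ i, ((e i : ℝ)) ^ (2 * e i) := by ring
    _ = ((2*T)! : ℝ) * ∏ i, ((e i : ℝ)) ^ (2 * e i) := by rw [hcast]
    _ ≤ Real.exp (2*(T:ℝ)) * (T:ℝ)^(2*T) * ∏ i, ((2 * e i)! : ℝ) := hkey

variable {Ω' : Type*} [MeasurableSpace Ω'] {μ' : Measure Ω'}

lemma aux_integral_prod {n : ℕ} [IsProbabilityMeasure μ'] (g : Fin n → Ω' → ℝ)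
    (hg : ∀ i, Measurable (g i))
    (hind : iIndepFun g μ')
    (s : Finset (Fin n)) :
    ∫ ω, ∏ i ∈ s, g i ω ∂μ' = ∏ i ∈ s, ∫ ω, g i ω ∂μ' := by
  induction s using Finset.cons_induction with
  | empty => simp
  | cons a s ha ih =>
      have hIF : IndepFun (∏ j ∈ s, g j) (g a) μ' :=
        hind.indepFun_finsetProd_of_notMem hg ha
      have hmeas : Measurable (∏ j ∈ s, g j) := by
        rw [Finset.prod_fn]
        exact Finset.measurable_prod _ fun i _ => hg i
      have := hIF.symm.integral_fun_mul_eq_mul_integral (hg a).aestronglyMeasurable hmeas.aestronglyMeasurable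
      simp only [Finset.prod_cons]
      rw [← ih]
      have heq : (fun ω => g a ω * ∏ i ∈ s, g i ω) = fun ω => g a ω * (∏ i ∈ s, g i) ω := by
        funext ω
        simp [Finset.prod_apply]
      calc ∫ ω, g a ω * ∏ i ∈ s, g i ω ∂μ' = ∫ ω, g a ω * (∏ i ∈ s, g i) ω ∂μ' := by rw [heq]
        _ = (∫ ω, g a ω ∂μ') * ∫ ω, (∏ i ∈ s, g i) ω ∂μ' := this
        _ = (∫ ω, g a ω ∂μ') * ∫ ω, ∏ i ∈ s, g i ω ∂μ' := by
            congr 1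
            refine integral_congr_ae (Filter.Eventually.of_forall fun ω => ?_)
            simp [Finset.prod_apply]

lemma aux_integrable_prod {n : ℕ} [IsProbabilityMeasure μ'] (g : Fin n → Ω' → ℝ)
    (hg : ∀ i, Measurable (g i))
    (hind : iIndepFun g μ')
    (hint : ∀ i, Integrable (g i) μ') (s : Finset (Fin n)) :
    Integrable (fun ω => ∏ i ∈ s, g i ω) μ' := by
  induction s using Finset.cons_induction with
  | empty => simpa using integrable_const (1:ℝ)
  | cons a s ha ih =>
      have hIF : IndepFun (∏ j ∈ s, g j) (g a) μ' :=
        hind.indepFun_finsetProd_of_notMem hg ha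
      have hprod : Integrable (∏ j ∈ s, g j) μ' := by
        refine (integrable_congr (Filter.Eventually.of_forall fun ω => ?_)).1 ih
        simp [Finset.prod_apply]
      have := (hIF.integrable_mul hprod (hint a)).const_mul 1
      refine (integrable_congr (Filter.Eventually.of_forall fun ω => ?_)).1 this
      simp only [Pi.mul_apply, Finset.prod_apply, Finset.prod_cons, one_mul]
      ring

lemma aux_symm_add [IsProbabilityMeasure μ'] {X Z : Ω' → ℝ} (hX : Measurable X)
    (hZ : Measurable Z) (hind : IndepFun X Z μ')
    (hsX : μ'.map X = μ'.map (fun ω => -X ω)) (hsZ : μ'.map Z = μ'.map (fun ω => -Z ω)) :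
    μ'.map (fun ω => X ω + Z ω) = μ'.map (fun ω => -(X ω + Z ω)) := by
  have hind' : IndepFun (fun ω => -X ω) (fun ω => -Z ω) μ' :=
    hind.comp measurable_neg measurable_neg
  have h1 : μ'.map (fun ω => (X ω, Z ω)) = (μ'.map X).prod (μ'.map Z) :=
    (indepFun_iff_map_prod_eq_prod_map_map hX.aemeasurable hZ.aemeasurable).1 hind
  have h2 : μ'.map (fun ω => (-X ω, -Z ω)) =
      (μ'.map (fun ω => -X ω)).prod (μ'.map (fun ω => -Z ω)) :=
    (indepFun_iff_map_prod_eq_prod_map_map hX.neg.aemeasurable hZ.neg.aemeasurable).1 hind'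
  have hadd : Measurable (fun p : ℝ × ℝ => p.1 + p.2) := measurable_add
  calc μ'.map (fun ω => X ω + Z ω)
      = Measure.map (fun p : ℝ × ℝ => p.1 + p.2) (μ'.map (fun ω => (X ω, Z ω))) := by
        rw [Measure.map_map hadd (hX.prodMk hZ)]
        rfl
    _ = Measure.map (fun p : ℝ × ℝ => p.1 + p.2) (μ'.map (fun ω => (-X ω, -Z ω))) := by
        rw [h1, h2, ← hsX, ← hsZ]
    _ = μ'.map (fun ω => -(X ω + Z ω)) := by
        rw [Measure.map_map hadd (show Measurable (fun ω => (-X ω, -Z ω)) from hX.neg.prodMk hZ.neg)]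
        congr 1
        funext ω
        simp
        ring

lemma aux_symm_sum {n : ℕ} [IsProbabilityMeasure μ'] (f : Fin n → Ω' → ℝ)
    (hmeas : ∀ i, Measurable (f i))
    (hind : iIndepFun f μ')
    (hsym : ∀ i, μ'.map (f i) = μ'.map (fun ω => -(f i ω))) (s : Finset (Fin n)) :
    μ'.map (fun ω => ∑ i ∈ s, f i ω) = μ'.map (fun ω => -(∑ i ∈ s, f i ω)) := by
  induction s using Finset.cons_induction with
  | empty => simp
  | cons a s ha ih =>
      have hZmeas : Measurable fun ω => ∑ i ∈ s, f i ω :=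
        Finset.measurable_sum _ fun i _ => hmeas i
      have hindXZ : IndepFun (f a) (fun ω => ∑ i ∈ s, f i ω) μ' := by
        have h2 := (hind.indepFun_finsetSum_of_notMem hmeas ha).symm
        have h3 : (∑ j ∈ s, f j) = (fun ω => ∑ j ∈ s, f j ω) := by
          funext ω
          simp [Finset.sum_apply]
        rwa [h3] at h2
      have := aux_symm_add (hmeas a) hZmeas hindXZ (hsym a) ih
      have h4 : (fun ω => ∑ i ∈ Finset.cons a s ha, f i ω)
          = fun ω => f a ω + ∑ i ∈ s, f i ω := by
        funext ω
        rw [Finset.sum_cons]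
      have h5 : (fun ω => -(∑ i ∈ Finset.cons a s ha, f i ω))
          = fun ω => -(f a ω + ∑ i ∈ s, f i ω) := by
        funext ω
        rw [Finset.sum_cons]
      rw [h4, h5]
      exact this
  
lemma aux_lint_flip [IsProbabilityMeasure μ'] {X Z : Ω' → ℝ} (hX : Measurable X)
    (hZ : Measurable Z) (hind : IndepFun X Z μ') (hsZ : μ'.map Z = μ'.map (fun ω => -Z ω))
    {g : ℝ → ℝ≥0∞} (hg : Measurable g) :
    ∫⁻ ω, g (X ω - Z ω) ∂μ' = ∫⁻ ω, g (X ω + Z ω) ∂μ' := by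
  have hind' : IndepFun X (fun ω => -Z ω) μ' := hind.comp measurable_id measurable_neg
  have h1 : μ'.map (fun ω => (X ω, Z ω)) = (μ'.map X).prod (μ'.map Z) :=
    (indepFun_iff_map_prod_eq_prod_map_map hX.aemeasurable hZ.aemeasurable).1 hind
  have h2 : μ'.map (fun ω => (X ω, -Z ω)) = (μ'.map X).prod (μ'.map (fun ω => -Z ω)) :=
    (indepFun_iff_map_prod_eq_prod_map_map hX.aemeasurable hZ.neg.aemeasurable).1 hind'
  have hgp : Measurable (fun p : ℝ × ℝ => g (p.1 + p.2)) := hg.comp measurable_add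
  calc ∫⁻ ω, g (X ω - Z ω) ∂μ'
      = ∫⁻ p, g (p.1 + p.2) ∂(μ'.map (fun ω => (X ω, -Z ω))) := by
        rw [lintegral_map hgp (show Measurable (fun ω => (X ω, -Z ω)) from hX.prodMk hZ.neg)]
        refine lintegral_congr fun ω => ?_
        rw [sub_eq_add_neg]
    _ = ∫⁻ p, g (p.1 + p.2) ∂(μ'.map (fun ω => (X ω, Z ω))) := by rw [h1, h2, ← hsZ]
    _ = ∫⁻ ω, g (X ω + Z ω) ∂μ' := lintegral_map hgp (hX.prodMk hZ)

lemma aux_odd_moment {X : Ω' → ℝ} (hX : Measurable X)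
    (hs : μ'.map X = μ'.map (fun ω => -X ω)) {d : ℕ} (hd : Odd d) :
    ∫ ω, X ω ^ d ∂μ' = 0 := by
  have hm : AEStronglyMeasurable (fun y : ℝ => y ^ d) (μ'.map X) :=
    (measurable_id.pow_const d).aestronglyMeasurable
  have hm' : AEStronglyMeasurable (fun y : ℝ => y ^ d) (μ'.map (fun ω => -X ω)) := by
    rw [← hs]; exact hm
  have h1 : ∫ ω, X ω ^ d ∂μ' = ∫ y, y ^ d ∂(μ'.map X) :=
    (integral_map hX.aemeasurable hm).symm
  have h2 : ∫ y, y ^ d ∂(μ'.map (fun ω => -X ω)) = ∫ ω, (-X ω) ^ d ∂μ' :=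
    integral_map hX.neg.aemeasurable hm'
  have h3 : ∫ ω, (-X ω) ^ d ∂μ' = - ∫ ω, X ω ^ d ∂μ' := by
    rw [← integral_neg]
    refine integral_congr_ae (Filter.Eventually.of_forall fun ω => ?_)
    simp [hd.neg_pow]
  rw [hs, h2, h3] at h1
  linarith

lemma aux_ident_moment {X X' : Ω' → ℝ} (hX : Measurable X) (hX' : Measurable X')
    (h : μ'.map X = μ'.map X') (d : ℕ) :
    ∫ ω, X ω ^ d ∂μ' = ∫ ω, X' ω ^ d ∂μ' := by
  have hm : AEStronglyMeasurable (fun y : ℝ => y ^ d) (μ'.map X) :=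
    (measurable_id.pow_const d).aestronglyMeasurable
  rw [← integral_map hX.aemeasurable hm, h,
    integral_map hX'.aemeasurable (by rw [← h]; exact hm)]

lemma aux_ident_integrable {X X' : Ω' → ℝ} (hX : Measurable X) (hX' : Measurable X')
    (h : μ'.map X = μ'.map X') (d : ℕ) (hint : Integrable (fun ω => X ω ^ d) μ') :
    Integrable (fun ω => X' ω ^ d) μ' := by
  have hm : AEStronglyMeasurable (fun y : ℝ => y ^ d) (μ'.map X) :=
    (measurable_id.pow_const d).aestronglyMeasurable
  have h1 : Integrable (fun y : ℝ => y ^ d) (μ'.map X) :=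
    (integrable_map_measure hm hX.aemeasurable).2 hint
  rw [h] at h1
  exact (integrable_map_measure (by rw [← h]; exact hm) hX'.aemeasurable).1 h1

end Statement12Aux

set_option maxHeartbeats 1000000 in
/-- Proposition 21 of the paper, moment bound for linear forms of
i.i.d. symmetric random variables. -/
theorem statement12 :
    ∃ C : ℝ, 0 < C ∧
      ∀ (n T : ℕ) (Ω : Type) (_ : MeasurableSpace Ω) (μ : Measure Ω)
        (_ : IsProbabilityMeasure μ) (Y : Fin n → Ω → ℝ) (x : Fin n → ℝ) (v : ℝ)
        (hn : 0 < n),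
        1 ≤ T →
        (∀ i, Measurable (Y i)) →
        iIndepFun Y μ →
        (∀ i j, Measure.map (Y i) μ = Measure.map (Y j) μ) →
        (∀ i, Measure.map (Y i) μ = Measure.map (fun ω => -(Y i ω)) μ) →
        l2 x ≤ 1 → linf x < v →
        mom μ (2 * (T : ℝ)) (fun ω => ∑ i, Y i ω * x i) ≤
          C * (v * sSup {z : ℝ | ∃ t : ℕ, 1 ≤ t ∧ t ≤ T ∧
            z = ((T : ℝ) / (t : ℝ)) * (1 / ((T : ℝ) * v ^ 2)) ^ ((1 : ℝ) / (2 * t)) *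
              mom μ (2 * (t : ℝ)) (Y ⟨0, hn⟩)}) := by
  refine ⟨7, by norm_num, ?_⟩
  intro n T Ω mΩ μ hPM Y x v hn hT hYmeas hYindep hident hsymm hl2 hlinf
  haveI := hPM
  set Y0 : Ω → ℝ := Y ⟨0, hn⟩ with hY0def
  set S : Ω → ℝ := fun ω => ∑ i, Y i ω * x i with hSdef
  set K : ℝ := sSup {z : ℝ | ∃ t : ℕ, 1 ≤ t ∧ t ≤ T ∧
      z = ((T : ℝ) / (t : ℝ)) * (1 / ((T : ℝ) * v ^ 2)) ^ ((1 : ℝ) / (2 * t)) *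
        mom μ (2 * (t : ℝ)) Y0} with hKdef
  -- basic positivity facts
  have hTR : (0:ℝ) < (T:ℝ) := by exact_mod_cast hT
  have hvpos : 0 < v := by
    have h0 : (0:ℝ) ≤ linf x := Real.iSup_nonneg (fun i => abs_nonneg _)
    linarith
  have hxle : ∀ i, |x i| ≤ v := by
    intro i
    have h1 : |x i| ≤ linf x := le_ciSup (f := fun i => |x i|) (Set.Finite.bddAbove
      (Set.finite_range _)) i
    linarith
  have hxv2 : ∀ i, x i ^ 2 ≤ v ^ 2 := by
    intro i
    calc x i ^ 2 = |x i| ^ 2 := (sq_abs _).symm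
      _ ≤ v ^ 2 := pow_le_pow_left₀ (abs_nonneg _) (hxle i) 2
  have hsumsq : ∑ i, x i ^ 2 ≤ 1 := by
    have h0 : (0:ℝ) ≤ ∑ i, x i ^ 2 := Finset.sum_nonneg fun i _ => sq_nonneg _
    have h1 : Real.sqrt (∑ i, x i ^ 2) ≤ 1 := hl2
    nlinarith [Real.sq_sqrt h0, Real.sqrt_nonneg (∑ i, x i ^ 2)]
  have hmom_nonneg : ∀ (q : ℝ) (f : Ω → ℝ), 0 ≤ mom μ q f := fun q f =>
    Real.rpow_nonneg (integral_nonneg fun ω => Real.rpow_nonneg (abs_nonneg _) _) _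
  have hSmeas : Measurable S := Finset.measurable_sum _ fun i _ => (hYmeas i).mul_const (x i)
  -- the supremum K
  have hKz : ∀ t : ℕ, 1 ≤ t → t ≤ T →
      ((T : ℝ) / (t : ℝ)) * (1 / ((T : ℝ) * v ^ 2)) ^ ((1 : ℝ) / (2 * t)) *
        mom μ (2 * (t : ℝ)) Y0 ≤ K := by
    intro t h1 h2
    have hseteq : {z : ℝ | ∃ t : ℕ, 1 ≤ t ∧ t ≤ T ∧
        z = ((T : ℝ) / (t : ℝ)) * (1 / ((T : ℝ) * v ^ 2)) ^ ((1 : ℝ) / (2 * t)) *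
          mom μ (2 * (t : ℝ)) Y0}
        = ↑((Finset.Icc 1 T).image (fun t : ℕ =>
          ((T : ℝ) / (t : ℝ)) * (1 / ((T : ℝ) * v ^ 2)) ^ ((1 : ℝ) / (2 * t)) *
            mom μ (2 * (t : ℝ)) Y0)) := by
      ext z
      simp only [Set.mem_setOf_eq, Finset.coe_image, Set.mem_image, Finset.mem_coe,
        Finset.mem_Icc]
      constructor
      · rintro ⟨t, ha, hb, rfl⟩; exact ⟨t, ⟨ha, hb⟩, rfl⟩
      · rintro ⟨t, ⟨ha, hb⟩, rfl⟩; exact ⟨t, ha, hb, rfl⟩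
    have hbdd : BddAbove {z : ℝ | ∃ t : ℕ, 1 ≤ t ∧ t ≤ T ∧
        z = ((T : ℝ) / (t : ℝ)) * (1 / ((T : ℝ) * v ^ 2)) ^ ((1 : ℝ) / (2 * t)) *
          mom μ (2 * (t : ℝ)) Y0} := by
      rw [hseteq]
      exact (Finset.image _ (Finset.Icc 1 T)).finite_toSet.bddAbove
    exact le_csSup hbdd ⟨t, h1, h2, rfl⟩
  have hK0 : 0 ≤ K := by
    refine le_trans ?_ (hKz 1 le_rfl hT)
    have : (0:ℝ) ≤ (1 / ((T : ℝ) * v ^ 2)) ^ ((1 : ℝ) / (2 * (1:ℕ))) :=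
      Real.rpow_nonneg (by positivity) _
    have := hmom_nonneg (2 * ((1:ℕ) : ℝ)) Y0
    positivity
  -- pointwise identification of rpow and npow
  have habs : ∀ (f : Ω → ℝ) (t : ℕ), (fun ω => |f ω| ^ (2*(t:ℝ))) = (fun ω => f ω ^ (2*t)) := by
    intro f t
    funext ω
    have h1 : (2*(t:ℝ)) = ((2*t : ℕ) : ℝ) := by push_cast; ring
    rw [h1, Real.rpow_natCast, Even.pow_abs (even_two_mul t)]
  have hmomS : mom μ (2*(T:ℝ)) S = (∫ ω, S ω ^ (2*T) ∂μ) ^ ((1:ℝ)/(2*(T:ℝ))) := by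
    have h0 : mom μ (2*(T:ℝ)) S = (∫ ω, |S ω| ^ (2*(T:ℝ)) ∂μ) ^ ((1:ℝ)/(2*(T:ℝ))) := by
      rw [mom]
    rw [h0, habs S T]
  have hRHS0 : (0:ℝ) ≤ 7 * (v * K) := by positivity
  by_cases hgood : Integrable (fun ω => Y0 ω ^ (2*T)) μ
  · -- main case
    have hT0 : 0 < T := hT
    have hYint2T : ∀ i, Integrable (fun ω => Y i ω ^ (2*T)) μ := fun i =>
      aux_ident_integrable (hYmeas ⟨0,hn⟩) (hYmeas i) (hident ⟨0,hn⟩ i) (2*T) hgood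
    have hYintd : ∀ i, ∀ d, d ≤ 2*T → Integrable (fun ω => Y i ω ^ d) μ := by
      intro i d hd
      have hbound : ∀ ω, ‖Y i ω ^ d‖ ≤ ‖1 + Y i ω ^ (2*T)‖ := by
        intro ω
        have h2 : |Y i ω| ^ d ≤ 1 + |Y i ω| ^ (2*T) := by
          rcases le_or_gt (|Y i ω|) 1 with h | h
          · have h5 := pow_le_one₀ (abs_nonneg (Y i ω)) h (n := d)
            nlinarith [pow_nonneg (abs_nonneg (Y i ω)) (2*T)]
          · have h5 := pow_le_pow_right₀ h.le hd
            nlinarith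
        have h3 : ‖Y i ω ^ d‖ = |Y i ω| ^ d := by rw [Real.norm_eq_abs, abs_pow]
        have h4 : ‖1 + Y i ω ^ (2*T)‖ = 1 + |Y i ω| ^ (2*T) := by
          rw [Real.norm_eq_abs, abs_of_nonneg (by
            nlinarith [(even_two_mul T).pow_nonneg (Y i ω)] : (0:ℝ) ≤ 1 + Y i ω ^ (2*T))]
          rw [(even_two_mul T).pow_abs]
        rw [h3, h4]
        exact h2
      exact Integrable.mono ((integrable_const 1).add (hYint2T i))
        ((hYmeas i).pow_const d).aestronglyMeasurable
        (Filter.Eventually.of_forall hbound)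
    set I : ℕ → ℝ := fun d => ∫ ω, Y0 ω ^ d ∂μ with hIdef
    have hIeq : ∀ i d, ∫ ω, Y i ω ^ d ∂μ = I d := fun i d =>
      aux_ident_moment (hYmeas i) (hYmeas ⟨0,hn⟩) (hident i ⟨0,hn⟩) d
    have hIodd : ∀ d, Odd d → I d = 0 := fun d hd =>
      aux_odd_moment (hYmeas ⟨0,hn⟩) (hsymm ⟨0,hn⟩) hd
    have hInn : ∀ t, 0 ≤ I (2*t) := fun t =>
      integral_nonneg fun ω => (even_two_mul t).pow_nonneg _
    have hI0 : I 0 = 1 := by simp [hIdef]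
    have hIbound : ∀ t : ℕ, 1 ≤ t → t ≤ T →
        I (2*t) ≤ ((t:ℝ)/(T:ℝ))^(2*t) * ((T:ℝ)*v^2) * K^(2*t) := by
      intro t h1 h2
      have htR : (0:ℝ) < (t:ℝ) := by exact_mod_cast h1
      have hTv2 : (0:ℝ) < (T:ℝ)*v^2 := by positivity
      set M : ℝ := mom μ (2*(t:ℝ)) Y0 with hMdef
      have hM0 : 0 ≤ M := hmom_nonneg _ _
      have hMI : M ^ (2*t) = I (2*t) := by
        have hIint : (∫ ω, |Y0 ω| ^ (2*(t:ℝ)) ∂μ) = I (2*t) := by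
          rw [habs Y0 t]
        have h0 : M = (I (2*t)) ^ ((1:ℝ)/(2*(t:ℝ))) := by
          rw [hMdef, mom, hIint]
        rw [h0, ← Real.rpow_natCast ((I (2*t)) ^ ((1:ℝ)/(2*(t:ℝ)))) (2*t),
          ← Real.rpow_mul (hInn t),
          show ((1:ℝ)/(2*(t:ℝ))) * ((2*t : ℕ) : ℝ) = 1 by push_cast; field_simp]
        exact Real.rpow_one _
      have hb : (0:ℝ) < (1 / ((T : ℝ) * v ^ 2)) ^ ((1 : ℝ) / (2 * (t:ℝ))) :=
        Real.rpow_pos_of_pos (by positivity) _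
      have hzK := hKz t h1 h2
      have hMle : M ≤ ((t:ℝ)/(T:ℝ)) * ((T:ℝ)*v^2) ^ ((1:ℝ)/(2*(t:ℝ))) * K := by
        have ha : (0:ℝ) < (T:ℝ)/(t:ℝ) := by positivity
        have hab : (0:ℝ) < (T:ℝ)/(t:ℝ) * (1 / ((T : ℝ) * v ^ 2)) ^ ((1 : ℝ) / (2 * (t:ℝ))) :=
          mul_pos ha hb
        have h3 : M * ((T:ℝ)/(t:ℝ) * (1 / ((T : ℝ) * v ^ 2)) ^ ((1 : ℝ) / (2 * (t:ℝ)))) ≤ K := by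
          calc M * ((T:ℝ)/(t:ℝ) * (1 / ((T : ℝ) * v ^ 2)) ^ ((1 : ℝ) / (2 * (t:ℝ))))
              = (T:ℝ)/(t:ℝ) * (1 / ((T : ℝ) * v ^ 2)) ^ ((1 : ℝ) / (2 * (t:ℝ))) * M := by ring
            _ ≤ K := hzK
        have h4 : M ≤ K / ((T:ℝ)/(t:ℝ) * (1 / ((T : ℝ) * v ^ 2)) ^ ((1 : ℝ) / (2 * (t:ℝ)))) :=
          (le_div_iff₀ hab).2 h3
        have h5 : K / ((T:ℝ)/(t:ℝ) * (1 / ((T : ℝ) * v ^ 2)) ^ ((1 : ℝ) / (2 * (t:ℝ))))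
            = ((t:ℝ)/(T:ℝ)) * ((T:ℝ)*v^2) ^ ((1:ℝ)/(2*(t:ℝ))) * K := by
          rw [one_div ((T:ℝ)*v^2), Real.inv_rpow hTv2.le]
          field_simp
        rw [h5] at h4
        exact h4
      calc I (2*t) = M ^ (2*t) := hMI.symm
        _ ≤ (((t:ℝ)/(T:ℝ)) * ((T:ℝ)*v^2) ^ ((1:ℝ)/(2*(t:ℝ))) * K) ^ (2*t) :=
            pow_le_pow_left₀ hM0 hMle _
        _ = ((t:ℝ)/(T:ℝ))^(2*t) * (((T:ℝ)*v^2) ^ ((1:ℝ)/(2*(t:ℝ))))^(2*t) * K^(2*t) := by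
            rw [mul_pow, mul_pow]
        _ = ((t:ℝ)/(T:ℝ))^(2*t) * ((T:ℝ)*v^2) * K^(2*t) := by
            congr 2
            rw [← Real.rpow_natCast (((T:ℝ)*v^2) ^ ((1:ℝ)/(2*(t:ℝ)))) (2*t),
              ← Real.rpow_mul hTv2.le,
              show ((1:ℝ)/(2*(t:ℝ))) * ((2*t : ℕ) : ℝ) = 1 by push_cast; field_simp]
            exact Real.rpow_one _
    have hprodindep : ∀ d : Fin n → ℕ,
        iIndepFun
          (fun i ω => Y i ω ^ d i) μ :=
      fun d => hYindep.comp (fun i y => y ^ d i) (fun i => measurable_id.pow_const (d i))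
    have hprodint : ∀ d : Fin n → ℕ, (∀ i, d i ≤ 2*T) →
        Integrable (fun ω => ∏ i, Y i ω ^ d i) μ := fun d hd =>
      aux_integrable_prod _ (fun i => (hYmeas i).pow_const (d i)) (hprodindep d)
        (fun i => hYintd i (d i) (hd i)) Finset.univ
    have hprodeq : ∀ d : Fin n → ℕ, ∫ ω, ∏ i, Y i ω ^ d i ∂μ = ∏ i, I (d i) := by
      intro d
      rw [aux_integral_prod _ (fun i => (hYmeas i).pow_const (d i)) (hprodindep d) Finset.univ]
      exact Finset.prod_congr rfl fun i _ => hIeq i (d i)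
    have hdle : ∀ d ∈ piAntidiag (univ : Finset (Fin n)) (2*T), ∀ i, d i ≤ 2*T := by
      intro d hd i
      rw [Finset.mem_piAntidiag] at hd
      rw [← hd.1]
      exact Finset.single_le_sum (fun j _ => Nat.zero_le _) (Finset.mem_univ i)
    have hexp : ∫ ω, S ω ^ (2*T) ∂μ = ∑ d ∈ piAntidiag (univ : Finset (Fin n)) (2*T),
        ((Nat.multinomial univ d : ℝ) * ∏ i, x i ^ d i) * ∏ i, I (d i) := by
      have hpt : (fun ω => S ω ^ (2*T)) = fun ω =>
          ∑ d ∈ piAntidiag (univ : Finset (Fin n)) (2*T),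
            ((Nat.multinomial univ d : ℝ) * ∏ i, x i ^ d i) * ∏ i, Y i ω ^ d i := by
        funext ω
        show (∑ i, Y i ω * x i) ^ (2*T) = _
        rw [Finset.sum_pow_eq_sum_piAntidiag]
        refine Finset.sum_congr rfl fun d hd => ?_
        simp_rw [mul_pow]
        rw [Finset.prod_mul_distrib]
        ring
      rw [hpt, integral_finset_sum _ (fun d hd => (hprodint d (hdle d hd)).const_mul _)]
      refine Finset.sum_congr rfl fun d hd => ?_
      rw [integral_const_mul, hprodeq d]
    have hvanish : ∑ d ∈ (piAntidiag (univ : Finset (Fin n)) (2*T)).filter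
          (fun d => ¬ ∀ i, Even (d i)),
        ((Nat.multinomial univ d : ℝ) * ∏ i, x i ^ d i) * ∏ i, I (d i) = 0 := by
      refine Finset.sum_eq_zero fun d hd => ?_
      rw [Finset.mem_filter] at hd
      have hd2 := hd.2
      push_neg at hd2
      obtain ⟨i, hi⟩ := hd2
      have hzero : I (d i) = 0 := hIodd _ (Nat.not_even_iff_odd.1 hi)
      have hz2 : ∏ i, I (d i) = 0 := Finset.prod_eq_zero (Finset.mem_univ i) hzero
      rw [hz2, mul_zero]
    have hreindex : ∑ d ∈ (piAntidiag (univ : Finset (Fin n)) (2*T)).filter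
          (fun d => ∀ i, Even (d i)),
        ((Nat.multinomial univ d : ℝ) * ∏ i, x i ^ d i) * ∏ i, I (d i)
        = ∑ e ∈ piAntidiag (univ : Finset (Fin n)) T,
        ((Nat.multinomial univ (fun i => 2 * e i) : ℝ) * ∏ i, x i ^ (2 * e i)) *
          ∏ i, I (2 * e i) := by
      refine Finset.sum_nbij' (fun d => fun i => d i / 2) (fun e => fun i => 2 * e i)
        ?_ ?_ ?_ ?_ ?_
      · intro d hd
        rw [Finset.mem_filter, Finset.mem_piAntidiag] at hd
        obtain ⟨⟨hsum, -⟩, hev⟩ := hd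
        rw [Finset.mem_piAntidiag]
        refine ⟨?_, fun i _ => Finset.mem_univ i⟩
        have h2 : ∀ i ∈ (univ : Finset (Fin n)), 2 * (d i / 2) = d i := by
          intro i _
          have h3 := Nat.even_iff.1 (hev i)
          omega
        have h5 : 2 * ∑ i, (d i / 2) = 2 * T := by
          rw [Finset.mul_sum, Finset.sum_congr rfl h2, hsum]
        show ∑ i, d i / 2 = T
        omega
      · intro e he
        rw [Finset.mem_piAntidiag] at he
        rw [Finset.mem_filter, Finset.mem_piAntidiag]
        exact ⟨⟨by rw [← Finset.mul_sum, he.1], fun i _ => Finset.mem_univ i⟩,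
          fun i => even_two_mul (e i)⟩
      · intro d hd
        rw [Finset.mem_filter] at hd
        funext i
        show 2 * (d i / 2) = d i
        have h3 := Nat.even_iff.1 (hd.2 i)
        omega
      · intro e he
        funext i
        show (2 * e i) / 2 = e i
        omega
      · intro d hd
        rw [Finset.mem_filter] at hd
        have hfun : ∀ i, 2 * (d i / 2) = d i := by
          intro i
          have h3 := Nat.even_iff.1 (hd.2 i)
          omega
        have h1 : Nat.multinomial univ (fun i => 2 * (d i / 2)) = Nat.multinomial univ d :=
          Nat.multinomial_congr fun i _ => hfun i
        have h2 : ∏ i, x i ^ (2 * (d i / 2)) = ∏ i, x i ^ d i :=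
          Finset.prod_congr rfl fun i _ => by rw [hfun i]
        have h3 : ∏ i, I (2 * (d i / 2)) = ∏ i, I (d i) :=
          Finset.prod_congr rfl fun i _ => by rw [hfun i]
        rw [h1, h2, h3]
    have hterm : ∀ e ∈ piAntidiag (univ : Finset (Fin n)) T,
        ((Nat.multinomial univ (fun i => 2 * e i) : ℝ) * ∏ i, x i ^ (2 * e i)) *
          ∏ i, I (2 * e i)
        ≤ Real.exp (2*(T:ℝ)) * (v^(2*T) *
            ∏ i ∈ (univ : Finset (Fin n)).filter (fun i => e i ≠ 0), ((T:ℝ) * x i ^ 2)) *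
          K^(2*T) := by
      intro e he
      have hesum : ∑ i, e i = T := (Finset.mem_piAntidiag.1 he).1
      have heT : ∀ i, e i ≤ T := by
        intro i
        rw [← hesum]
        exact Finset.single_le_sum (fun j _ => Nat.zero_le _) (Finset.mem_univ i)
      have hPnn : (0:ℝ) ≤ ∏ i, x i ^ (2 * e i) :=
        Finset.prod_nonneg fun i _ => (even_two_mul (e i)).pow_nonneg _
      have hIb : ∀ i, I (2 * e i) ≤ ((e i:ℝ)/(T:ℝ))^(2*e i) *
          ((if e i = 0 then 1 else (T:ℝ)*v^2) * K^(2*e i)) := by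
        intro i
        by_cases h0 : e i = 0
        · rw [h0]
          simp [hI0]
        · have h1 : 1 ≤ e i := Nat.one_le_iff_ne_zero.2 h0
          have h6 := hIbound (e i) h1 (heT i)
          rw [if_neg h0]
          calc I (2 * e i) ≤ ((e i:ℝ)/(T:ℝ))^(2*e i) * ((T:ℝ)*v^2) * K^(2*e i) := h6
            _ = ((e i:ℝ)/(T:ℝ))^(2*e i) * (((T:ℝ)*v^2) * K^(2*e i)) := by ring
      have hprodle : ∏ i, I (2 * e i) ≤
          (∏ i, ((e i:ℝ)/(T:ℝ))^(2*e i)) *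
          ((∏ i, (if e i = 0 then 1 else (T:ℝ)*v^2)) * K^(2*T)) := by
        calc ∏ i, I (2 * e i)
            ≤ ∏ i, (((e i:ℝ)/(T:ℝ))^(2*e i) *
                ((if e i = 0 then 1 else (T:ℝ)*v^2) * K^(2*e i))) :=
              Finset.prod_le_prod (fun i _ => hInn (e i)) (fun i _ => hIb i)
          _ = (∏ i, ((e i:ℝ)/(T:ℝ))^(2*e i)) *
              ((∏ i, (if e i = 0 then 1 else (T:ℝ)*v^2)) * ∏ i, K^(2*e i)) := by
              rw [Finset.prod_mul_distrib, Finset.prod_mul_distrib]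
          _ = _ := by
              rw [Finset.prod_pow_eq_pow_sum _ _ _,
                show ∑ i, 2 * e i = 2*T by rw [← Finset.mul_sum, hesum]]
      have hW : (∏ i, (if e i = 0 then 1 else (T:ℝ)*v^2)) =
          ∏ i ∈ (univ : Finset (Fin n)).filter (fun i => e i ≠ 0), ((T:ℝ)*v^2) := by
        rw [Finset.prod_filter]
        refine Finset.prod_congr rfl fun i _ => ?_
        by_cases h0 : e i = 0 <;> simp [h0]
      have hx2e : (∏ i, x i ^ (2 * e i)) *
          ∏ i ∈ (univ : Finset (Fin n)).filter (fun i => e i ≠ 0), ((T:ℝ)*v^2)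
          ≤ v^(2*T) *
            ∏ i ∈ (univ : Finset (Fin n)).filter (fun i => e i ≠ 0), ((T:ℝ) * x i ^ 2) := by
        have hxne : ∀ i ∈ (univ : Finset (Fin n)), x i ^ (2 * e i) ≠ 1 → e i ≠ 0 := by
          intro i _ hne h0
          exact hne (by rw [h0, mul_zero, pow_zero])
        have hxprod : ∏ i, x i ^ (2 * e i) =
            ∏ i ∈ (univ : Finset (Fin n)).filter (fun i => e i ≠ 0), x i ^ (2 * e i) :=
          (Finset.prod_filter_of_ne hxne).symm
        have hsne : ∀ i ∈ (univ : Finset (Fin n)), 2 * e i ≠ 0 → e i ≠ 0 := by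
          intro i _ hne h0
          exact hne (by rw [h0, mul_zero])
        have hsum2e : ∑ i ∈ (univ : Finset (Fin n)).filter (fun i => e i ≠ 0), 2 * e i
            = 2 * T := by
          rw [Finset.sum_filter_of_ne hsne, ← Finset.mul_sum, hesum]
        calc (∏ i, x i ^ (2 * e i)) *
            ∏ i ∈ (univ : Finset (Fin n)).filter (fun i => e i ≠ 0), ((T:ℝ)*v^2)
            = ∏ i ∈ (univ : Finset (Fin n)).filter (fun i => e i ≠ 0),
                (x i ^ (2 * e i) * ((T:ℝ)*v^2)) := by
              rw [hxprod, ← Finset.prod_mul_distrib]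
          _ ≤ ∏ i ∈ (univ : Finset (Fin n)).filter (fun i => e i ≠ 0),
                (v ^ (2 * e i) * ((T:ℝ) * x i ^ 2)) := by
              refine Finset.prod_le_prod (fun i _ => ?_) (fun i hi => ?_)
              · exact mul_nonneg ((even_two_mul (e i)).pow_nonneg _) (by positivity)
              · have h1 : 1 ≤ e i :=
                  Nat.one_le_iff_ne_zero.2 (Finset.mem_filter.1 hi).2
                set ee := e i - 1 with heedef
                have hee : e i = ee + 1 := by omega
                have hple : (x i ^ 2) ^ ee ≤ (v ^ 2) ^ ee :=
                  pow_le_pow_left₀ (sq_nonneg _) (hxv2 i) ee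
                rw [hee]
                calc x i ^ (2 * (ee + 1)) * ((T:ℝ)*v^2)
                    = (x i ^ 2) ^ ee * ((T:ℝ) * (x i ^2) * v^2) := by
                      rw [pow_mul]
                      ring
                  _ ≤ (v ^ 2) ^ ee * ((T:ℝ) * (x i ^2) * v^2) := by
                      refine mul_le_mul_of_nonneg_right hple (by positivity)
                  _ = v ^ (2 * (ee + 1)) * ((T:ℝ) * x i ^ 2) := by
                      rw [pow_mul]
                      ring
          _ = v^(2*T) *
              ∏ i ∈ (univ : Finset (Fin n)).filter (fun i => e i ≠ 0), ((T:ℝ) * x i ^ 2) := by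
              rw [Finset.prod_mul_distrib, Finset.prod_pow_eq_pow_sum _ _ _, hsum2e]
      have hmultb := aux_multinomial_bound hT0 e hesum
      have hWnn : (0:ℝ) ≤ ∏ i, (if e i = 0 then 1 else (T:ℝ)*v^2) :=
        Finset.prod_nonneg fun i _ => by by_cases h0 : e i = 0 <;> simp [h0] <;> positivity
      have hmultnn : (0:ℝ) ≤ (Nat.multinomial univ (fun i => 2 * e i) : ℝ) := Nat.cast_nonneg _
      calc ((Nat.multinomial univ (fun i => 2 * e i) : ℝ) * ∏ i, x i ^ (2 * e i)) *
            ∏ i, I (2 * e i)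
          ≤ ((Nat.multinomial univ (fun i => 2 * e i) : ℝ) * ∏ i, x i ^ (2 * e i)) *
            ((∏ i, ((e i:ℝ)/(T:ℝ))^(2*e i)) *
              ((∏ i, (if e i = 0 then 1 else (T:ℝ)*v^2)) * K^(2*T))) :=
            mul_le_mul_of_nonneg_left hprodle (mul_nonneg hmultnn hPnn)
        _ = ((Nat.multinomial univ (fun i => 2 * e i) : ℝ) *
              ∏ i, ((e i:ℝ)/(T:ℝ))^(2*e i)) *
            ((∏ i, x i ^ (2 * e i)) * (∏ i, (if e i = 0 then 1 else (T:ℝ)*v^2))) *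
            K^(2*T) := by ring
        _ ≤ Real.exp (2*(T:ℝ)) * (v^(2*T) *
              ∏ i ∈ (univ : Finset (Fin n)).filter (fun i => e i ≠ 0), ((T:ℝ) * x i ^ 2)) *
            K^(2*T) := by
            refine mul_le_mul_of_nonneg_right ?_ (by positivity)
            refine mul_le_mul hmultb ?_ (mul_nonneg hPnn hWnn) (Real.exp_nonneg _)
            rw [hW]
            exact hx2e
    have hsumB : ∫ ω, S ω ^ (2*T) ∂μ ≤
        Real.exp (2*(T:ℝ)) * v^(2*T) * K^(2*T) * (2^T * Real.exp (T:ℝ)) := by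
      rw [hexp, ← Finset.sum_filter_add_sum_filter_not
        (piAntidiag (univ : Finset (Fin n)) (2*T)) (fun d => ∀ i, Even (d i)),
        hvanish, add_zero, hreindex]
      calc ∑ e ∈ piAntidiag (univ : Finset (Fin n)) T,
            ((Nat.multinomial univ (fun i => 2 * e i) : ℝ) * ∏ i, x i ^ (2 * e i)) *
              ∏ i, I (2 * e i)
          ≤ ∑ e ∈ piAntidiag (univ : Finset (Fin n)) T,
            Real.exp (2*(T:ℝ)) * (v^(2*T) *
              ∏ i ∈ (univ : Finset (Fin n)).filter (fun i => e i ≠ 0), ((T:ℝ) * x i ^ 2)) *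
            K^(2*T) := Finset.sum_le_sum hterm
        _ = Real.exp (2*(T:ℝ)) * v^(2*T) * K^(2*T) *
            ∑ e ∈ piAntidiag (univ : Finset (Fin n)) T,
              ∏ i ∈ (univ : Finset (Fin n)).filter (fun i => e i ≠ 0), ((T:ℝ) * x i ^ 2) := by
            rw [Finset.mul_sum]
            refine Finset.sum_congr rfl fun e he => ?_
            ring
        _ ≤ Real.exp (2*(T:ℝ)) * v^(2*T) * K^(2*T) * (2^T * Real.exp (T:ℝ)) := by
            refine mul_le_mul_of_nonneg_left ?_ (by positivity)
            exact aux_sigma_bound (fun i => x i ^ 2) (fun i => sq_nonneg _) hsumsq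
    have hconst : Real.exp (2*(T:ℝ)) * Real.exp (T:ℝ) * 2^T ≤ 49^T := by
      have h3 : Real.exp (2*(T:ℝ)) * Real.exp (T:ℝ) = Real.exp ((T:ℝ) * 3) := by
        rw [← Real.exp_add]
        congr 1
        ring
      rw [h3, show ((T:ℝ)*3) = ((T:ℕ):ℝ) * (3:ℝ) by norm_num, Real.exp_nat_mul]
      have h5 : Real.exp 3 * 2 ≤ 49 := by
        have h7 := Real.exp_one_lt_d9
        have h6 : Real.exp 3 = Real.exp 1 ^ 3 := by
          rw [show (3:ℝ) = ((3:ℕ):ℝ) * (1:ℝ) by norm_num, Real.exp_nat_mul]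
        have h8 : Real.exp 1 ^ 3 < (2.7182818286:ℝ)^3 :=
          pow_lt_pow_left₀ h7 (Real.exp_pos 1).le (by norm_num)
        have h9 : (2.7182818286:ℝ)^3 ≤ 24.5 := by norm_num
        rw [h6]
        nlinarith
      calc Real.exp 3 ^ T * 2^T = (Real.exp 3 * 2)^T := (mul_pow _ _ T).symm
        _ ≤ 49^T := pow_le_pow_left₀ (by positivity) (by linarith) T
    have hfinal : ∫ ω, S ω ^ (2*T) ∂μ ≤ (7*(v*K))^(2*T) := by
      calc ∫ ω, S ω ^ (2*T) ∂μ
          ≤ Real.exp (2*(T:ℝ)) * v^(2*T) * K^(2*T) * (2^T * Real.exp (T:ℝ)) := hsumB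
        _ = (v*K)^(2*T) * (Real.exp (2*(T:ℝ)) * Real.exp (T:ℝ) * 2^T) := by
            rw [mul_pow v K]
            ring
        _ ≤ (v*K)^(2*T) * 49^T := mul_le_mul_of_nonneg_left hconst (by positivity)
        _ = (7*(v*K))^(2*T) := by
            rw [mul_pow 7 (v*K), show (49:ℝ)^T = 7^(2*T) by rw [pow_mul]; norm_num]
            ring
    rw [hmomS]
    have hpos : (0:ℝ) ≤ ∫ ω, S ω ^ (2*T) ∂μ :=
      integral_nonneg fun ω => (even_two_mul T).pow_nonneg _
    calc (∫ ω, S ω ^ (2*T) ∂μ) ^ ((1:ℝ)/(2*(T:ℝ)))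
        ≤ ((7*(v*K))^(2*T) : ℝ) ^ ((1:ℝ)/(2*(T:ℝ))) :=
          Real.rpow_le_rpow hpos hfinal (by positivity)
      _ = 7*(v*K) := by
          rw [← Real.rpow_natCast (7*(v*K)) (2*T), ← Real.rpow_mul (by positivity),
            show ((2*T:ℕ):ℝ) * ((1:ℝ)/(2*(T:ℝ))) = 1 by push_cast; field_simp]
          exact Real.rpow_one _
  · -- bad case : LHS is zero
    by_cases hx0 : ∀ i, x i = 0
    · have hS0 : S = fun _ => (0:ℝ) := by
        funext ω
        rw [hSdef]
        simp [hx0]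
      rw [hmomS, hS0]
      have h2T : (2*T) ≠ 0 := by omega
      rw [show (fun (_ : Ω) => (0:ℝ) ^ (2*T)) = fun _ => (0:ℝ) by
        funext ω; exact zero_pow h2T]
      rw [integral_zero]
      rw [Real.zero_rpow (by positivity : (1:ℝ)/(2*(T:ℝ)) ≠ 0)]
      exact hRHS0
    · push_neg at hx0
      obtain ⟨i₀, hxi₀⟩ := hx0
      have hSnot : ¬ Integrable (fun ω => S ω ^ (2*T)) μ := by
        intro hint
        -- decompose S = X + Z
        set f : Fin n → Ω → ℝ := fun i ω => Y i ω * x i with hfdef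
        have hfmeas : ∀ i, Measurable (f i) := fun i => (hYmeas i).mul_const (x i)
        have hfind : iIndepFun f μ :=
          hYindep.comp (fun i y => y * x i) (fun i => measurable_mul_const (x i))
        have hfsym : ∀ i, μ.map (f i) = μ.map (fun ω => -(f i ω)) := by
          intro i
          have h1 : μ.map (f i) = (μ.map (Y i)).map (fun y => y * x i) := by
            rw [Measure.map_map (measurable_mul_const (x i)) (hYmeas i)]
            rfl
          have h2 : μ.map (fun ω => -(f i ω)) = (μ.map (fun ω => -(Y i ω))).map
              (fun y => y * x i) := by
            rw [Measure.map_map (measurable_mul_const (x i)) (show Measurable (fun ω => -(Y i ω)) from (hYmeas i).neg)]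
            congr 1
            funext ω
            simp [hfdef]
          rw [h1, h2, hsymm i]
        set X : Ω → ℝ := f i₀ with hXdef
        set Z : Ω → ℝ := fun ω => ∑ i ∈ Finset.univ.erase i₀, f i ω with hZdef
        have hXmeas : Measurable X := hfmeas i₀
        have hZmeas : Measurable Z := Finset.measurable_sum _ fun i _ => hfmeas i
        have hSXZ : ∀ ω, S ω = X ω + Z ω := by
          intro ω
          rw [hSdef]
          simp only [hXdef, hZdef]
          rw [add_comm, Finset.sum_erase_add _ _ (Finset.mem_univ i₀)]
        have hindXZ : IndepFun X Z μ := by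
          have h2 := (hfind.indepFun_finsetSum_of_notMem hfmeas
            (Finset.notMem_erase i₀ Finset.univ)).symm
          have h3 : (∑ j ∈ Finset.univ.erase i₀, f j) = Z := by
            funext ω
            rw [hZdef]
            simp [Finset.sum_apply]
          rwa [h3] at h2
        have hZsym : μ.map Z = μ.map (fun ω => -Z ω) := by
          have := aux_symm_sum f hfmeas hfind hfsym (Finset.univ.erase i₀)
          exact this
        -- lintegral bound
        set g : ℝ → ℝ≥0∞ := fun y => ENNReal.ofReal ((1:ℝ)/2 * y ^ (2*T)) with hgdef
        have hgmeas : Measurable g :=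
          ((measurable_id.pow_const (2*T)).const_mul ((1:ℝ)/2)).ennreal_ofReal
        have hflip : ∫⁻ ω, g (X ω - Z ω) ∂μ = ∫⁻ ω, g (X ω + Z ω) ∂μ :=
          aux_lint_flip hXmeas hZmeas hindXZ hZsym hgmeas
        have hSfin : ∫⁻ ω, ENNReal.ofReal (S ω ^ (2*T)) ∂μ < ⊤ := by
          have h1 : 0 ≤ᵐ[μ] fun ω => S ω ^ (2*T) :=
            Filter.Eventually.of_forall fun ω => (even_two_mul T).pow_nonneg _
          exact (hasFiniteIntegral_iff_ofReal h1).1 hint.2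
        have hptwise : ∀ ω, ENNReal.ofReal (X ω ^ (2*T)) ≤
            g (X ω + Z ω) + g (X ω - Z ω) := by
          intro ω
          have hconv := ((even_two_mul T).convexOn_pow (𝕜 := ℝ)).2 (Set.mem_univ (X ω + Z ω))
            (Set.mem_univ (X ω - Z ω)) (by norm_num : (0:ℝ) ≤ 1/2)
            (by norm_num : (0:ℝ) ≤ 1/2) (by norm_num)
          have hconv' : X ω ^ (2*T) ≤ (1:ℝ)/2 * (X ω + Z ω) ^ (2*T) +
              (1:ℝ)/2 * (X ω - Z ω) ^ (2*T) := by
            simp only [smul_eq_mul] at hconv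
            have heq : (1:ℝ)/2 * (X ω + Z ω) + (1:ℝ)/2 * (X ω - Z ω) = X ω := by ring
            rwa [heq] at hconv
          calc ENNReal.ofReal (X ω ^ (2*T))
              ≤ ENNReal.ofReal ((1:ℝ)/2 * (X ω + Z ω) ^ (2*T) +
                  (1:ℝ)/2 * (X ω - Z ω) ^ (2*T)) := ENNReal.ofReal_le_ofReal hconv'
            _ = g (X ω + Z ω) + g (X ω - Z ω) := by
                rw [hgdef]
                exact ENNReal.ofReal_add
                  (mul_nonneg (by norm_num) ((even_two_mul T).pow_nonneg _))
                  (mul_nonneg (by norm_num) ((even_two_mul T).pow_nonneg _))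
        have hgS : ∫⁻ ω, g (X ω + Z ω) ∂μ ≤ ∫⁻ ω, ENNReal.ofReal (S ω ^ (2*T)) ∂μ := by
          refine lintegral_mono fun ω => ?_
          rw [hgdef]
          apply ENNReal.ofReal_le_ofReal
          rw [hSXZ ω]
          nlinarith [(even_two_mul T).pow_nonneg (X ω + Z ω)]
        have hXfin : ∫⁻ ω, ENNReal.ofReal (X ω ^ (2*T)) ∂μ < ⊤ := by
          calc ∫⁻ ω, ENNReal.ofReal (X ω ^ (2*T)) ∂μ
              ≤ ∫⁻ ω, (g (X ω + Z ω) + g (X ω - Z ω)) ∂μ := lintegral_mono hptwise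
            _ = ∫⁻ ω, g (X ω + Z ω) ∂μ + ∫⁻ ω, g (X ω - Z ω) ∂μ :=
                lintegral_add_left (hgmeas.comp (hXmeas.add hZmeas)) _
            _ = ∫⁻ ω, g (X ω + Z ω) ∂μ + ∫⁻ ω, g (X ω + Z ω) ∂μ := by rw [hflip]
            _ ≤ (∫⁻ ω, ENNReal.ofReal (S ω ^ (2*T)) ∂μ) +
                ∫⁻ ω, ENNReal.ofReal (S ω ^ (2*T)) ∂μ := add_le_add hgS hgS
            _ < ⊤ := ENNReal.add_lt_top.2 ⟨hSfin, hSfin⟩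
        have hXint : Integrable (fun ω => X ω ^ (2*T)) μ := by
          refine ⟨(hXmeas.pow_const (2*T)).aestronglyMeasurable, ?_⟩
          rw [hasFiniteIntegral_iff_ofReal (Filter.Eventually.of_forall fun ω =>
            (even_two_mul T).pow_nonneg (X ω))]
          exact hXfin
        have hx2T : (x i₀ : ℝ)^(2*T) ≠ 0 := pow_ne_zero _ hxi₀
        have hYi0int : Integrable (fun ω => Y i₀ ω ^ (2*T)) μ := by
          have h1 : (fun ω => Y i₀ ω ^ (2*T)) = fun ω => (x i₀ ^ (2*T))⁻¹ * X ω ^ (2*T) := by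
            funext ω
            simp only [hXdef, hfdef]
            rw [mul_pow]
            field_simp
          rw [h1]
          exact hXint.const_mul _
        exact hgood (aux_ident_integrable (hYmeas i₀) (hYmeas ⟨0,hn⟩)
          (hident i₀ ⟨0,hn⟩) (2*T) hYi0int)
      rw [hmomS, integral_undef hSnot,
        Real.zero_rpow (by positivity : (1:ℝ)/(2*(T:ℝ)) ≠ 0)]
      exact hRHS0
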